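/- arXiv:2011.05660 — 10 statements merged into one kernel-verified Lean document; each statement's English description precedes it below -/
import Mathlib

section
/- Let G be a group, n ≥ 2 a natural number, and a, b ∈ G satisfy a·b·a = b·a·b and a·b²·a = b^(n-2). Then b·a²·b = a^(n-2), provided also aⁿ = 1. -/
theorem symmetric_relation {G : Type*} [Group G] (a b : G) (n : ℕ) (hn : 2 ≤ n)
    (hbraid : a * b * a = b * a * b) (hrel : a * b ^ 2 * a = b ^ (n - 2))
    (ha : a ^ n = 1) : b * a ^ 2 * b = a ^ (n - 2) := by
  -- conjugation by δ = a*b*a swaps a and b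
  have hfa : (a*b*a) * a * (a*b*a)⁻¹ = b := by
    have h : (a*b*a) * a * (a*b*a)⁻¹ = (b*a*b) * a * (a*b*a)⁻¹ := by rw [hbraid]
    rw [h]; group
  have hfb : (a*b*a) * b * (a*b*a)⁻¹ = a := by
    have h : (a*b*a) * b * (a*b*a)⁻¹ = (a*b*a) * b * (b*a*b)⁻¹ := by rw [hbraid]
    rw [h]; group
  have key : (a*b*a) * (a * b^2 * a) * (a*b*a)⁻¹ = b * a^2 * b := by
    calc (a*b*a) * (a * b^2 * a) * (a*b*a)⁻¹
        = ((a*b*a)*a*(a*b*a)⁻¹) * ((a*b*a)*b*(a*b*a)⁻¹)^2 * ((a*b*a)*a*(a*b*a)⁻¹) := by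
          simp only [pow_two]; group
      _ = b * a^2 * b := by rw [hfa, hfb]
  have key2 : (a*b*a) * b^(n-2) * (a*b*a)⁻¹ = a^(n-2) := by
    calc (a*b*a) * b^(n-2) * (a*b*a)⁻¹
        = ((a*b*a)*b*(a*b*a)⁻¹)^(n-2) := by
          rw [conj_pow]
      _ = a^(n-2) := by rw [hfb]
  rw [← key2, ← hrel]
  exact key.symm
end

section
/- Let G be a group and a, b ∈ G satisfy a·b·a = b·a·b and a·b²·a = b^(n-2) for some n ≥ 2. Then (ab)³ = aⁿ, i.e. ababab = aⁿ. -/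
theorem ab_cubed_eq_a_pow {G : Type*} [Group G] (a b : G) (n : ℕ) (hn : 2 ≤ n)
    (hbraid : a * b * a = b * a * b) (hrel : a * b ^ 2 * a = b ^ (n - 2)) :
    (a * b) ^ 3 = a ^ n := by
  have h1 : (a*b*a)*a = b*(a*b*a) := by
    calc (a*b*a)*a = (b*a*b)*a := by rw [hbraid]
    _ = b*(a*b*a) := by simp [mul_assoc]
  have h2 : (a*b*a)*b = a*(a*b*a) := by
    calc (a*b*a)*b = a*(b*a*b) := by simp [mul_assoc]
    _ = a*(a*b*a) := by rw [hbraid]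
  have hconj : (a*b*a) * b * (a*b*a)⁻¹ = a := mul_inv_eq_iff_eq_mul.mpr h2
  have key : (a*b*a)*(a*b^2*a) = (b*a^2*b)*(a*b*a) := by
    calc (a*b*a)*(a*b^2*a) = ((a*b*a)*a)*(b*(b*a)) := by simp [pow_succ, mul_assoc]
    _ = (b*(a*b*a))*(b*(b*a)) := by rw [h1]
    _ = b*(((a*b*a)*b)*(b*a)) := by simp [mul_assoc]
    _ = b*((a*(a*b*a))*(b*a)) := by rw [h2]
    _ = (b*a)*(((a*b*a)*b)*a) := by simp [mul_assoc]
    _ = (b*a)*((a*(a*b*a))*a) := by rw [h2]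
    _ = (b*a*a)*((a*b*a)*a) := by simp [mul_assoc]
    _ = (b*a*a)*(b*(a*b*a)) := by rw [h1]
    _ = (b*a^2*b)*(a*b*a) := by simp [pow_succ, mul_assoc]
  have h3 : (a*b*a)*(a*b^2*a)*(a*b*a)⁻¹ = b*a^2*b := mul_inv_eq_iff_eq_mul.mpr key
  have han : b*a^2*b = a^(n-2) := by
    rw [← h3, hrel, ← conj_pow, hconj]
  calc (a*b)^3 = a*((b*a*b)*(a*b)) := by simp [pow_succ, mul_assoc]
  _ = a*((a*b*a)*(a*b)) := by rw [hbraid]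
  _ = a^2*(b*a^2*b) := by simp [pow_succ, mul_assoc]
  _ = a^2 * a^(n-2) := by rw [han]
  _ = a^n := by rw [← pow_add, Nat.add_sub_cancel' hn]
end

section
/- Let G be a group and a, b ∈ G satisfy a·b·a = b·a·b and a·b²·a = b^(n-2) for some n ≥ 2. Then aⁿ = bⁿ. -/
theorem a_pow_eq_b_pow {G : Type*} [Group G] (a b : G) (n : ℕ) (hn : 2 ≤ n)
    (hbraid : a * b * a = b * a * b) (hrel : a * b ^ 2 * a = b ^ (n - 2)) :
    a ^ n = b ^ n := by
  let c := a * b * a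
  have h : a * c = c * b := by
    show a * (a * b * a) = a * b * a * b
    calc a * (a * b * a) = a * (a * b * a) := rfl
      _ = a * (b * a * b) := by rw [hbraid]
      _ = a * b * a * b := by simp [mul_assoc]
  have h1 : a = c * b * c⁻¹ := by rw [← h]; group
  have hb : b ^ n = c * c := by
    have h2 : c * c = b * (a * b ^ 2 * a) * b := by
      show a * b * a * (a * b * a) = _
      calc a * b * a * (a * b * a) = b * a * b * (b * a * b) := by rw [hbraid]
        _ = b * (a * b ^ 2 * a) * b := by simp [sq, mul_assoc]
    rw [h2, hrel]
    have h3 : b * b ^ (n - 2) * b = b ^ (n - 2 + 2) := by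
      rw [pow_add, pow_two]
      simp [mul_assoc, mul_comm, pow_succ, ← pow_succ']
    rw [h3, Nat.sub_add_cancel hn]
  calc a ^ n = (c * b * c⁻¹) ^ n := by rw [← h1]
    _ = c * b ^ n * c⁻¹ := by rw [conj_pow]
    _ = b ^ n := by rw [hb]; group
end

section
/- Let G be a group and a, b ∈ G satisfy a·b·a = b·a·b and a·b²·a = b^(n-2) for some n ≥ 2. Then the element aⁿ commutes with both a and b, hence is central in the subgroup generated by a and b. -/
theorem a_pow_central {G : Type*} [Group G] (a b : G) (n : ℕ) (hn : 2 ≤ n)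
    (hbraid : a * b * a = b * a * b) (hrel : a * b ^ 2 * a = b ^ (n - 2)) :
    Commute (a ^ n) a ∧ Commute (a ^ n) b ∧
      ∀ g ∈ Subgroup.closure ({a, b} : Set G), Commute (a ^ n) g := by
  -- Δ = a*b*a semiconjugates a ↦ b and b ↦ a
  have s1 : SemiconjBy (a*b*a) a b := by
    show a*b*a*a = b*(a*b*a)
    conv_lhs => rw [hbraid]
    simp [mul_assoc]
  have s2 : SemiconjBy (a*b*a) b a := by
    show a*b*a*b = a*(a*b*a)
    conv_rhs => rw [hbraid]
    simp [mul_assoc]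
  -- conjugating hrel by Δ gives the symmetric relation
  have s_rel : SemiconjBy (a*b*a) (a * b ^ 2 * a) (b * a ^ 2 * b) :=
    (s1.mul_right (s2.pow_right 2)).mul_right s1
  have s_pow : SemiconjBy (a*b*a) (b ^ (n-2)) (a ^ (n-2)) := s2.pow_right _
  have hsym : a ^ (n - 2) = b * a ^ 2 * b := by
    have h1 : (a*b*a) * (a * b ^ 2 * a) = (b * a ^ 2 * b) * (a*b*a) := s_rel
    rw [hrel] at h1
    have h2 : (a*b*a) * (b ^ (n-2)) = (a ^ (n-2)) * (a*b*a) := s_pow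
    rw [h1] at h2
    exact (mul_right_cancel h2).symm
  -- a^n = (a*b*a)^2 = (b*a*b)^2 = b^n
  have hnsplit : n = 1 + (n - 2) + 1 := by omega
  have han : a ^ n = a*b*a*(a*b*a) := by
    rw [hnsplit, pow_add, pow_add, pow_one, hsym]
    simp [pow_two, mul_assoc]
  have hbn : b ^ n = b*a*b*(b*a*b) := by
    rw [hnsplit, pow_add, pow_add, pow_one, ← hrel]
    simp [pow_two, mul_assoc]
  have hab : a ^ n = b ^ n := by rw [han, hbn, hbraid]
  have hca : Commute (a ^ n) a := (Commute.refl a).pow_left n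
  have hcb : Commute (a ^ n) b := by rw [hab]; exact (Commute.refl b).pow_left n
  refine ⟨hca, hcb, ?_⟩
  intro g hg
  induction hg using Subgroup.closure_induction with
  | mem x hx =>
    rcases hx with rfl | rfl
    · exact hca
    · exact hcb
  | one => exact Commute.one_right _
  | mul x y _ _ hx hy => exact hx.mul_right hy
  | inv x _ hx => exact hx.inv_right
end

section
/- Let G be a group and a, b ∈ G satisfy a·b·a = b·a·b and a·b²·a = b (the case n = 3). Then a⁶ = 1. -/
theorem a_pow_six_eq_one {G : Type*} [Group G] (a b : G)
    (hbraid : a * b * a = b * a * b) (hrel : a * b ^ 2 * a = b) : a ^ 6 = 1 := by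
  -- b² = a⁻¹ b a⁻¹
  have h1 : b * b = a⁻¹ * (b * a⁻¹) := by
    conv_rhs => rw [← hrel]
    rw [pow_two]; group
  -- b = (ab) a (ab)⁻¹
  have h2 : a * b * a * (b⁻¹ * a⁻¹) = b := by
    rw [hbraid]; group
  -- b² = (ab) a² (ab)⁻¹
  have h3 : b * b = a * b * a * a * (b⁻¹ * a⁻¹) := by
    calc b * b = (a * b * a * (b⁻¹ * a⁻¹)) * (a * b * a * (b⁻¹ * a⁻¹)) := by rw [h2]
    _ = a * b * a * a * (b⁻¹ * a⁻¹) := by group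
  have e : a * b * a * a * (b⁻¹ * a⁻¹) = a⁻¹ * (b * a⁻¹) := by
    rw [← h3]; exact h1
  -- a³ b = b a⁻³
  have hcomm : a * (a * (a * b)) = b * (a⁻¹ * (a⁻¹ * a⁻¹)) := by
    calc a * (a * (a * b))
        = a * (a * (a * b * a * a * (b⁻¹ * a⁻¹))) * (a * (b * (a⁻¹ * a⁻¹))) := by group
      _ = a * (a * (a⁻¹ * (b * a⁻¹))) * (a * (b * (a⁻¹ * a⁻¹))) := by rw [e]
      _ = a * (b * b) * (a⁻¹ * a⁻¹) := by group
      _ = a * (a⁻¹ * (b * a⁻¹)) * (a⁻¹ * a⁻¹) := by rw [h1]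
      _ = b * (a⁻¹ * (a⁻¹ * a⁻¹)) := by group
  -- push a³ through the braid relation: b a b = a b a⁻⁵
  have hfinal : b * (a * b) = a * (b * (a⁻¹ * (a⁻¹ * (a⁻¹ * (a⁻¹ * a⁻¹))))) := by
    calc b * (a * b)
        = b * (a⁻¹ * (a⁻¹ * a⁻¹)) * (a * (a * (a * (a * b)))) := by group
      _ = (a * (a * (a * b))) * (a * (a * (a * (a * b)))) := by rw [hcomm]
      _ = a * (a * (a * (b * (a * (a * (a * (a * b))))))) := by group
      _ = a * (a * (a * (b * (a * (b * (a⁻¹ * (a⁻¹ * a⁻¹))))))) := by rw [hcomm]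
      _ = a * (a * (a * (b * a * b * (a⁻¹ * (a⁻¹ * a⁻¹))))) := by group
      _ = a * (a * (a * (a * b * a * (a⁻¹ * (a⁻¹ * a⁻¹))))) := by rw [hbraid]
      _ = a * (a * (a * (a * b))) * (a⁻¹ * a⁻¹) := by group
      _ = a * (b * (a⁻¹ * (a⁻¹ * a⁻¹))) * (a⁻¹ * a⁻¹) := by rw [hcomm]
      _ = a * (b * (a⁻¹ * (a⁻¹ * (a⁻¹ * (a⁻¹ * a⁻¹))))) := by group
  have h7 : (a * b) * a = (a * b) * (a⁻¹ * (a⁻¹ * (a⁻¹ * (a⁻¹ * a⁻¹)))) := by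
    calc (a * b) * a = b * (a * b) := by rw [hbraid]; group
      _ = a * (b * (a⁻¹ * (a⁻¹ * (a⁻¹ * (a⁻¹ * a⁻¹))))) := hfinal
      _ = (a * b) * (a⁻¹ * (a⁻¹ * (a⁻¹ * (a⁻¹ * a⁻¹)))) := by group
  have h8 := mul_left_cancel h7
  calc a ^ 6 = a * a * a * a * a * a := by simp [pow_succ, mul_assoc]
    _ = a * a * a * a * a * (a⁻¹ * (a⁻¹ * (a⁻¹ * (a⁻¹ * a⁻¹)))) := by rw [← h8]
    _ = 1 := by group
end

section
/- Let G be a group and a, b ∈ G satisfy a·b·a = b·a·b and a·b²·a = b² (the case n = 4). Then a⁸ = 1. -/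
theorem a_pow_eight_eq_one {G : Type*} [Group G] (a b : G)
    (hbraid : a * b * a = b * a * b) (hrel : a * b ^ 2 * a = b ^ 2) : a ^ 8 = 1 := by
  have hrel' : a * (b * b) * a = b * b := by
    have := hrel; rw [pow_two] at this; exact this
  -- Δ = a*b*a ; ht : Δ*b = a*Δ ; hs : b*Δ = Δ*a
  have ht : (a * b * a) * b = a * (a * b * a) := by
    calc (a * b * a) * b = a * (b * a * b) := by group
      _ = a * (a * b * a) := by rw [hbraid]
  have hs : b * (a * b * a) = (a * b * a) * a := by
    calc b * (a * b * a) = (b * a * b) * a := by group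
      _ = (a * b * a) * a := by rw [hbraid]
  have key : (a*b*a) * (b*(a*a)*b) * (a*b*a) = (a*b*a) * (a*a) * (a*b*a) := by
    calc (a*b*a) * (b*(a*a)*b) * (a*b*a)
        = ((a*b*a)*b) * (a*(a*(b*(a*b*a)))) := by group
      _ = (a*(a*b*a)) * (a*(a*(b*(a*b*a)))) := by rw [ht]
      _ = a*((a*b*a)*a) * (a*(b*(a*b*a))) := by group
      _ = a*(b*(a*b*a)) * (a*(b*(a*b*a))) := by rw [← hs]
      _ = (a*b)*((a*b*a)*a) * (b*(a*b*a)) := by group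
      _ = (a*b)*(b*(a*b*a)) * (b*(a*b*a)) := by rw [← hs]
      _ = (a*(b*b))*((a*b*a)*b) * (a*b*a) := by group
      _ = (a*(b*b))*(a*(a*b*a)) * (a*b*a) := by rw [ht]
      _ = (a*(b*b)*a)*((a*b*a) * (a*b*a)) := by group
      _ = (b*b)*((a*b*a) * (a*b*a)) := by rw [hrel']
      _ = b*((b*(a*b*a)) * (a*b*a)) := by group
      _ = b*(((a*b*a)*a) * (a*b*a)) := by rw [hs]
      _ = (b*(a*b*a)) * (a * (a*b*a)) := by group
      _ = ((a*b*a)*a) * (a * (a*b*a)) := by rw [hs]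
      _ = (a*b*a) * (a*a) * (a*b*a) := by group
  have hconj : b*(a*a)*b = a*a :=
    mul_left_cancel (mul_right_cancel key)
  -- hab2 : a*(b*b) = (b*b)*a⁻¹
  have hab2 : a * (b * b) = (b * b) * a⁻¹ := by
    rw [eq_mul_inv_iff_mul_eq]; exact hrel'
  have ha2b2 : (a*a) * (b*b) = (b*b) * (a⁻¹*a⁻¹) := by
    calc (a*a)*(b*b) = a * (a*(b*b)) := by group
      _ = a * ((b*b)*a⁻¹) := by rw [hab2]
      _ = (a*(b*b))*a⁻¹ := by group
      _ = ((b*b)*a⁻¹)*a⁻¹ := by rw [hab2]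
      _ = (b*b)*(a⁻¹*a⁻¹) := by group
  have h44 : (a*a)*(a*a) = (b*b)*(b*b) := by
    calc (a*a)*(a*a) = (b*(a*a)*b)*(b*(a*a)*b) := by rw [hconj]
      _ = b*((a*a)*(b*b))*((a*a)*b) := by group
      _ = b*((b*b)*(a⁻¹*a⁻¹))*((a*a)*b) := by rw [ha2b2]
      _ = (b*b)*(b*b) := by group
  -- a^8 = a^4 * a^4 = a^4 * b^4 ; and a^4 * b^2 = b^2 * a^{-4}
  have ha4b2 : ((a*a)*(a*a)) * (b*b) = (b*b) * ((a⁻¹*a⁻¹)*(a⁻¹*a⁻¹)) := by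
    calc ((a*a)*(a*a))*(b*b) = (a*a) * ((a*a)*(b*b)) := by group
      _ = (a*a) * ((b*b)*(a⁻¹*a⁻¹)) := by rw [ha2b2]
      _ = ((a*a)*(b*b)) * (a⁻¹*a⁻¹) := by group
      _ = ((b*b)*(a⁻¹*a⁻¹)) * (a⁻¹*a⁻¹) := by rw [ha2b2]
      _ = (b*b) * ((a⁻¹*a⁻¹)*(a⁻¹*a⁻¹)) := by group
  have hinv4 : (a⁻¹*a⁻¹)*(a⁻¹*a⁻¹) = ((b*b)*(b*b))⁻¹ := by
    rw [← h44]; group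
  calc a ^ 8 = ((a*a)*(a*a)) * ((a*a)*(a*a)) := by simp only [← pow_two, ← pow_add]; norm_num [← pow_mul]
    _ = ((a*a)*(a*a)) * ((b*b)*(b*b)) := by rw [h44]
    _ = (((a*a)*(a*a)) * (b*b)) * (b*b) := by group
    _ = ((b*b) * ((a⁻¹*a⁻¹)*(a⁻¹*a⁻¹))) * (b*b) := by rw [ha4b2]
    _ = ((b*b) * ((b*b)*(b*b))⁻¹) * (b*b) := by rw [hinv4]
    _ = 1 := by group
end

section
/- Let G be a group and a, b ∈ G satisfy a·b·a = b·a·b and a·b²·a = b^(n-2) for some n ≥ 4. Then aⁿ = (b^(n-4)·a⁻¹)ⁿ. -/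
private lemma conj_pow_aux {G : Type*} [Group G] (g h : G) (n : ℕ) :
    (g * h * g⁻¹) ^ n = g * h ^ n * g⁻¹ := by
  induction n with
  | zero => simp
  | succ k ih => rw [pow_succ, pow_succ, ih]; group

theorem a_pow_formula {G : Type*} [Group G] (a b : G) (n : ℕ) (hn : 4 ≤ n)
    (hbraid : a * b * a = b * a * b) (hrel : a * b ^ 2 * a = b ^ (n - 2)) :
    a ^ n = (b ^ (n - 4) * a⁻¹) ^ n := by
  obtain ⟨d, hd⟩ : ∃ d, d = a * b * a := ⟨_, rfl⟩
  have hda : d * a = b * d := by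
    rw [hd]; conv_lhs => rw [hbraid]
    group
  have hdb : d * b = a * d := by
    rw [hd]; conv_rhs => rw [hbraid]
    group
  have hb' : b = d * a * d⁻¹ := by rw [hda]; group
  have ha' : a = d * b * d⁻¹ := by rw [hdb]; group
  -- key: d * d = a ^ n
  have h1 : a * b ^ 2 * a = d * a⁻¹ * a⁻¹ * d := by rw [hd, pow_two]; group
  have h2 : b ^ (n - 2) = d * a ^ (n - 2) * d⁻¹ := by
    conv_lhs => rw [hb', conj_pow_aux]
  have E : d * a⁻¹ * a⁻¹ * d = d * a ^ (n - 2) * d⁻¹ := by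
    rw [← h1, ← h2, hrel]
  have E3 : a ^ (n - 2) = a⁻¹ * a⁻¹ * (d * d) := by
    have h5 : a ^ (n - 2) = d⁻¹ * (d * a ^ (n - 2) * d⁻¹) * d := by group
    rw [h5, ← E]; group
  have hdd : d * d = a ^ n := by
    have h4 : a ^ n = a ^ 2 * a ^ (n - 2) := by
      rw [← pow_add]; congr 1; omega
    rw [h4, E3]; group
  have hbn : b ^ n = a ^ n := by
    conv_lhs => rw [hb', conj_pow_aux]
    rw [← hdd]; group
  -- a^n is central (commutes with b)
  have hcomm : d * (d * b) = b * (d * d) := by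
    rw [hdb, ← mul_assoc, hda, mul_assoc]
  have hcent : b * a ^ n * b⁻¹ = a ^ n := by
    rw [← hdd]
    calc b * (d * d) * b⁻¹ = d * (d * b) * b⁻¹ := by rw [hcomm]
      _ = d * d := by group
  -- the reflected relation
  have hrel2 : b * a ^ 2 * b = a ^ (n - 2) := by
    calc b * a ^ 2 * b = (d * a * d⁻¹) * (d * b * d⁻¹) ^ 2 * (d * a * d⁻¹) := by
          rw [← ha', ← hb']
      _ = d * (a * b ^ 2 * a) * d⁻¹ := by rw [conj_pow_aux]; group
      _ = d * b ^ (n - 2) * d⁻¹ := by rw [hrel]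
      _ = a ^ (n - 2) := by conv_rhs => rw [ha', conj_pow_aux]
  -- conjugate target down by d
  have hx : b ^ (n - 4) * a⁻¹ = d * (a ^ (n - 4) * b⁻¹) * d⁻¹ := by
    calc b ^ (n - 4) * a⁻¹
        = (d * a * d⁻¹) ^ (n - 4) * (d * b * d⁻¹)⁻¹ := by rw [← ha', ← hb']
      _ = d * (a ^ (n - 4) * b⁻¹) * d⁻¹ := by rw [conj_pow_aux]; group
  -- rewrite y = a^(n-4) * b⁻¹ as a conjugate of a²ba⁻²
  have hy : a ^ (n - 4) * b⁻¹ = b * (a ^ 2 * b * (a ^ 2)⁻¹) * b⁻¹ := by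
    have h6 : a ^ (n - 4) = a ^ (n - 2) * a⁻¹ * a⁻¹ := by
      have h7 : a ^ (n - 2) = a ^ (n - 4) * a ^ 2 := by
        rw [← pow_add]; congr 1; omega
      rw [h7]; group
    rw [h6, ← hrel2]; group
  have hyn : (a ^ (n - 4) * b⁻¹) ^ n = a ^ n := by
    rw [hy, conj_pow_aux, conj_pow_aux, hbn]
    have h8 : a ^ 2 * a ^ n * (a ^ 2)⁻¹ = a ^ n := by
      rw [← pow_add, Nat.add_comm, pow_add]; group
    rw [h8, hcent]
  rw [hx, conj_pow_aux, hyn, ← hdd]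
  group
end

section
/- In any group G, if x and y satisfy x² = y³ = (xy)ⁿ = 1 for some n ≥ 2, then a := y²x and b := xy² satisfy aⁿ = 1 and a·b²·a = b^(n-2). -/
theorem vonDyck_gens_satisfy_relations {G : Type*} [Group G] (x y : G) (n : ℕ)
    (hn : 2 ≤ n) (hx : x ^ 2 = 1) (hy : y ^ 3 = 1) (hxy : (x * y) ^ n = 1) :
    (y ^ 2 * x) ^ n = 1 ∧
      (y ^ 2 * x) * (x * y ^ 2) ^ 2 * (y ^ 2 * x) = (x * y ^ 2) ^ (n - 2) := by
  have hxx : x * x = 1 := by rw [← sq]; exact hx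
  have hyy : y * (y * y) = 1 := by rw [show y * (y * y) = y ^ 3 by rw [pow_succ, pow_succ, pow_one, mul_assoc]]; exact hy
  have hxinv : x⁻¹ = x := inv_eq_of_mul_eq_one_right hxx
  have hyinv : y⁻¹ = y * y := inv_eq_of_mul_eq_one_right hyy
  have hxs : ∀ t : G, x * (x * t) = t := by intro t; rw [← mul_assoc, hxx, one_mul]
  have hys : ∀ t : G, y * (y * (y * t)) = t := by
    intro t; rw [← mul_assoc, ← mul_assoc, mul_assoc y y y, hyy, one_mul]
  have ha : y ^ 2 * x = (x * y)⁻¹ := by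
    rw [mul_inv_rev, hxinv, hyinv, sq]
  constructor
  · rw [ha, inv_pow, hxy, inv_one]
  · -- (x*y)^(n-2) inverse is (x*y)^2
    have hpow : (x * y) ^ (n - 2) * (x * y) ^ 2 = 1 := by
      rw [← pow_add, Nat.sub_add_cancel hn]; exact hxy
    have hinv : ((x * y) ^ (n - 2))⁻¹ = (x * y) ^ 2 := inv_eq_of_mul_eq_one_right hpow
    have hb : x * y ^ 2 = y * (x * y)⁻¹ * y⁻¹ := by
      rw [mul_inv_rev, hxinv, hyinv, sq]
      simp [mul_assoc, hxs, hys]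
    have hbpow : (x * y ^ 2) ^ (n - 2) = y * ((x * y)⁻¹) ^ (n - 2) * y⁻¹ := by
      rw [hb, conj_pow]
    rw [hbpow, inv_pow, hinv]
    simp only [sq, hyinv]
    simp [mul_assoc, hxs, hys, hyy]
end

section
/- Let G be a group and a, b ∈ G satisfy a·b·a = b·a·b, a·b²·a = b^(n-2), and aⁿ = 1 for some n ≥ 2. Define x := aba and y := ab. Then x² = 1, y³ = 1, and (xy)ⁿ = 1. -/
theorem braid_gens_give_vonDyck {G : Type*} [Group G] (a b : G) (n : ℕ) (hn : 2 ≤ n)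
    (hbraid : a * b * a = b * a * b) (hrel : a * b ^ 2 * a = b ^ (n - 2))
    (ha : a ^ n = 1) :
    (a * b * a) ^ 2 = 1 ∧ (a * b) ^ 3 = 1 ∧ ((a * b * a) * (a * b)) ^ n = 1 := by
  have hconj : (a * b) * a * (a * b)⁻¹ = b := by
    rw [mul_inv_eq_iff_eq_mul]
    rw [mul_assoc a b a, ← mul_assoc, hbraid]
    group
  have hb : b ^ n = 1 := by
    rw [← hconj, conj_pow, ha]
    group
  have hsix : a * b * (a * b * a) * b = b ^ n := by
    rw [hbraid]
    have h : a * b * (b * a * b) * b = a * b ^ 2 * a * b ^ 2 := by simp [sq, mul_assoc]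
    rw [h, hrel, ← pow_add]
    congr 1
    omega
  have hx : (a * b * a) ^ 2 = 1 := by
    have h : (a * b * a) ^ 2 = a * b * (a * b * a) * b := by
      rw [sq]
      nth_rewrite 2 [hbraid]
      simp [mul_assoc]
    rw [h, hsix, hb]
  have hy : (a * b) ^ 3 = 1 := by
    have h : (a * b) ^ 3 = a * b * (a * b * a) * b := by simp [pow_succ, mul_assoc]
    rw [h, hsix, hb]
  have h2 : (a * b) ^ 2 = (a * b)⁻¹ := by
    apply eq_inv_of_mul_eq_one_left
    rw [← pow_succ]
    exact hy
  have hxy : (a * b * a) * (a * b) = a⁻¹ := by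
    calc (a * b * a) * (a * b) = b * (a * b) ^ 2 := by rw [hbraid]; simp [sq, mul_assoc]
    _ = b * (a * b)⁻¹ := by rw [h2]
    _ = a⁻¹ := by group
  refine ⟨hx, hy, ?_⟩
  rw [hxy, inv_pow, ha, inv_one]
end

section
/- Let G be a group and a, b ∈ G satisfy a·b·a = b·a·b and a·b²·a = b^(n-2) with n ≥ 2. In the quotient of the subgroup ⟨a,b⟩ by the normal (in fact central) subgroup generated by aⁿ, the images of a and b generate a group satisfying the Von Dyck relations: setting x = aba, y = ab, one has x² = y³ = (xy)ⁿ = 1 in the quotient. -/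
private lemma vonDyck_key {Q : Type*} [Group Q] (a b : Q) (n : ℕ) (hn : 2 ≤ n)
    (hbraid : a * b * a = b * a * b) (hrel : a * b ^ 2 * a = b ^ (n - 2))
    (han : a ^ n = 1) :
    (a * b * a) ^ 2 = 1 ∧ (a * b) ^ 3 = 1 ∧ ((a * b * a) * (a * b)) ^ n = 1 := by
  have hbconj : b = (a * b) * a * (a * b)⁻¹ := by
    have : (a * b) * a * (a * b)⁻¹ = (a * b * a) * b⁻¹ * a⁻¹ := by group
    rw [this, hbraid]; group
  have hbn1 : b ^ n = 1 := by
    rw [hbconj, conj_pow, han, mul_one, mul_inv_cancel]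
  have hbn2 : b ^ n = (b * a * b) * (b * a * b) := by
    have h1 : b ^ n = b ^ 1 * b ^ (n - 2) * b ^ 1 := by
      rw [← pow_add, ← pow_add]; congr 1; omega
    rw [h1, pow_one, ← hrel]; simp only [pow_succ, pow_zero, one_mul, mul_assoc]
  have hx2 : (a * b * a) ^ 2 = 1 := by
    rw [sq, hbraid, ← hbn2, hbn1]
  have hy3 : (a * b) ^ 3 = 1 := by
    have h2 : (a * b) ^ 3 = (a * b * a) * (b * a * b) := by simp only [pow_succ, pow_zero, one_mul, mul_assoc]
    rw [h2, hbraid, ← hbn2, hbn1]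
  refine ⟨hx2, hy3, ?_⟩
  have hxy : (a * b * a) * (a * b) = (b * a) * b ^ (n - 1) * (b * a)⁻¹ := by
    have h3 : b ^ (n - 1) = b ^ 1 * b ^ (n - 2) := by
      rw [← pow_add]; congr 1; omega
    rw [h3, pow_one, ← hrel, hbraid]; group
  rw [hxy, conj_pow, ← pow_mul, Nat.mul_comm, pow_mul, hbn1, one_pow, mul_one,
    mul_inv_cancel]

theorem quotient_satisfies_vonDyck_relations {G : Type*} [Group G] (a b : G) (n : ℕ)
    (hn : 2 ≤ n) (hbraid : a * b * a = b * a * b) (hrel : a * b ^ 2 * a = b ^ (n - 2))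
    (ha : a ∈ Subgroup.closure ({a, b} : Set G))
    (hb : b ∈ Subgroup.closure ({a, b} : Set G)) :
    let H := Subgroup.closure ({a, b} : Set G)
    let A : H := ⟨a, ha⟩
    let B : H := ⟨b, hb⟩
    let π := QuotientGroup.mk' (Subgroup.normalClosure ({A ^ n} : Set H))
    (π (A * B * A)) ^ 2 = 1 ∧ (π (A * B)) ^ 3 = 1 ∧
      (π (A * B * A) * π (A * B)) ^ n = 1 := by
  intro H A B π
  have hbH : A * B * A = B * A * B := Subtype.ext hbraid
  have hrH : A * B ^ 2 * A = B ^ (n - 2) := Subtype.ext hrel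
  have h1 : π A * π B * π A = π B * π A * π B := by
    rw [← map_mul, ← map_mul, ← map_mul, ← map_mul, hbH]
  have h2 : π A * (π B) ^ 2 * π A = (π B) ^ (n - 2) := by
    rw [← map_pow, ← map_mul, ← map_mul, ← map_pow, hrH]
  have h3 : (π A) ^ n = 1 := by
    rw [← map_pow]
    exact (QuotientGroup.eq_one_iff _).mpr
      (Subgroup.subset_normalClosure (Set.mem_singleton _))
  obtain ⟨c1, c2, c3⟩ := vonDyck_key (π A) (π B) n hn h1 h2 h3
  refine ⟨?_, ?_, ?_⟩
  · simpa [map_mul] using c1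
  · simpa [map_mul] using c2
  · simpa [map_mul] using c3
end
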